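/- arXiv:1303.2389 — 3 statements merged into one kernel-verified Lean document; each statement's English description precedes it below -/
import Mathlib

section
/- Fix an integer B ≥ 1. Then ∫_{τ²}^∞ (√x − τ) x^{B/2−1} e^{−x/2} dx ∼ 2 e^{−τ²/2} τ^{B−3} as τ → ∞, i.e., lim_{τ→∞} e^{τ²/2} τ^{3−B} ∫_{τ²}^∞ (√x − τ) x^{B/2−1} e^{−x/2} dx = 2. -/
open MeasureTheory Real Set Filter

lemma int_rpow_exp (s : ℝ) (hs : -1 < s) :
    IntegrableOn (fun x : ℝ => x ^ s * Real.exp (-x / 2)) (Ioi 0) := by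
  have h := integrableOn_rpow_mul_exp_neg_mul_rpow hs (one_pos : (0:ℝ) < 1) (by norm_num : (0:ℝ) < 1/2)
  refine h.congr_fun (fun x hx => ?_) measurableSet_Ioi
  beta_reduce
  rw [Real.rpow_one]
  ring_nf

lemma int_pow_exp (n : ℕ) :
    IntegrableOn (fun x : ℝ => x ^ n * Real.exp (-x)) (Ioi 0) := by
  have h := integrableOn_rpow_mul_exp_neg_mul_rpow
    (by exact_mod_cast neg_one_lt_zero.trans_le (Nat.cast_nonneg n) : (-1:ℝ) < (n:ℝ))
    (one_pos : (0:ℝ) < 1) (by norm_num : (0:ℝ) < 1)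
  refine h.congr_fun (fun x hx => ?_) measurableSet_Ioi
  beta_reduce
  rw [Real.rpow_one, Real.rpow_natCast]
  ring_nf

lemma one_add_pow_le (B : ℕ) (v : ℝ) (hv : 0 ≤ v) :
    (1 + v) ^ B ≤ 2 ^ B * (1 + v ^ B) := by
  rcases le_total v 1 with h | h
  · calc (1 + v) ^ B ≤ 2 ^ B := by
          apply pow_le_pow_left₀ (by linarith) (by linarith)
        _ ≤ 2 ^ B * (1 + v ^ B) := by
          nlinarith [pow_nonneg hv B, pow_pos (show (0:ℝ) < 2 by norm_num) B]
  · calc (1 + v) ^ B ≤ (2 * v) ^ B := by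
          apply pow_le_pow_left₀ (by linarith) (by linarith)
        _ = 2 ^ B * v ^ B := mul_pow 2 v B
        _ ≤ 2 ^ B * (1 + v ^ B) := by
          nlinarith [pow_pos (show (0:ℝ) < 2 by norm_num) B]

lemma bound_integrable (B : ℕ) :
    IntegrableOn (fun v : ℝ => 2 ^ B * ((1 + v ^ B) * Real.exp (-v))) (Ioi 0) := by
  apply Integrable.const_mul
  have h1 : IntegrableOn (fun v : ℝ => Real.exp (-v)) (Ioi 0) := by
    simpa using exp_neg_integrableOn_Ioi (0:ℝ) one_pos
  have h2 := int_pow_exp B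
  exact IntegrableOn.congr_fun (h1.add h2) (fun x hx => by simp; ring) measurableSet_Ioi

lemma est (B : ℕ) (hB : 1 ≤ B) (τ v : ℝ) (hτ : 1 ≤ τ) (hv : 0 ≤ v) :
    |v * (1 + v / τ ^ 2) ^ (B - 1) * Real.exp (-(v + v ^ 2 / (2 * τ ^ 2)))|
      ≤ 2 ^ B * ((1 + v ^ B) * Real.exp (-v)) := by
  have hτ2 : (1:ℝ) ≤ τ ^ 2 := by nlinarith
  have hτ2' : (0:ℝ) < τ ^ 2 := by linarith
  have h0 : (0:ℝ) ≤ 1 + v / τ ^ 2 := by positivity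
  rw [abs_of_nonneg (by positivity)]
  have h1 : v / τ ^ 2 ≤ v := div_le_self hv hτ2
  have h2 : (1 + v / τ ^ 2) ^ (B - 1) ≤ (1 + v) ^ (B - 1) :=
    pow_le_pow_left₀ h0 (by linarith) _
  have h3 : Real.exp (-(v + v ^ 2 / (2 * τ ^ 2))) ≤ Real.exp (-v) := by
    apply Real.exp_le_exp.mpr
    have : (0:ℝ) ≤ v ^ 2 / (2 * τ ^ 2) := by positivity
    linarith
  have hA : v * (1 + v / τ ^ 2) ^ (B - 1) ≤ (1 + v) ^ B := by
    calc v * (1 + v / τ ^ 2) ^ (B - 1) ≤ (1 + v) * (1 + v) ^ (B - 1) :=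
          mul_le_mul (by linarith) h2 (by positivity) (by linarith)
      _ = (1 + v) ^ (B - 1 + 1) := (pow_succ' _ _).symm
      _ = (1 + v) ^ B := by rw [Nat.sub_add_cancel hB]
  calc v * (1 + v / τ ^ 2) ^ (B - 1) * Real.exp (-(v + v ^ 2 / (2 * τ ^ 2)))
      ≤ (1 + v) ^ B * Real.exp (-v) :=
        mul_le_mul hA h3 (Real.exp_pos _).le (by positivity)
    _ ≤ 2 ^ B * (1 + v ^ B) * Real.exp (-v) :=
        mul_le_mul_of_nonneg_right (one_add_pow_le B v hv) (Real.exp_pos _).le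
    _ = 2 ^ B * ((1 + v ^ B) * Real.exp (-v)) := by ring

lemma dct (B : ℕ) (hB : 1 ≤ B) :
    Tendsto (fun τ : ℝ =>
        ∫ v in Ioi (0:ℝ), v * (1 + v / τ ^ 2) ^ (B - 1) * Real.exp (-(v + v ^ 2 / (2 * τ ^ 2))))
      atTop (nhds 1) := by
  have hint : ∫ v in Ioi (0:ℝ), v * Real.exp (-v) = 1 := by
    have h := Real.integral_rpow_mul_exp_neg_mul_Ioi (by norm_num : (0:ℝ) < 2)
      (by norm_num : (0:ℝ) < 1)
    rw [show ∫ v in Ioi (0:ℝ), v * Real.exp (-v)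
        = ∫ t in Ioi (0:ℝ), t ^ ((2:ℝ) - 1) * Real.exp (-(1 * t)) by
      refine setIntegral_congr_fun measurableSet_Ioi (fun x hx => ?_)
      norm_num]
    rw [h, Real.Gamma_two]
    norm_num
  suffices h : Tendsto (fun τ : ℝ =>
        ∫ v in Ioi (0:ℝ), v * (1 + v / τ ^ 2) ^ (B - 1) * Real.exp (-(v + v ^ 2 / (2 * τ ^ 2))))
      atTop (nhds (∫ v in Ioi (0:ℝ), v * Real.exp (-v))) by rwa [hint] at h
  apply tendsto_integral_filter_of_dominated_convergence
    (bound := fun v : ℝ => 2 ^ B * ((1 + v ^ B) * Real.exp (-v)))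
  · filter_upwards [eventually_ge_atTop (1:ℝ)] with τ hτ
    apply Continuous.aestronglyMeasurable
    fun_prop
  · filter_upwards [eventually_ge_atTop (1:ℝ)] with τ hτ
    refine (ae_restrict_iff' measurableSet_Ioi).mpr (ae_of_all _ fun v hv => ?_)
    rw [Real.norm_eq_abs]
    exact est B hB τ v hτ (le_of_lt hv)
  · exact bound_integrable B
  · refine ae_of_all _ fun v => ?_
    have l1 : Tendsto (fun τ : ℝ => v / τ ^ 2) atTop (nhds 0) :=
      Tendsto.div_atTop tendsto_const_nhds (tendsto_pow_atTop two_ne_zero)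
    have l2 : Tendsto (fun τ : ℝ => v ^ 2 / (2 * τ ^ 2)) atTop (nhds 0) :=
      Tendsto.div_atTop tendsto_const_nhds
        ((tendsto_pow_atTop two_ne_zero).const_mul_atTop two_pos)
    have l3 : Tendsto (fun τ : ℝ => (1 + v / τ ^ 2) ^ (B - 1)) atTop (nhds 1) := by
      have := (l1.const_add 1).pow (B - 1)
      simpa using this
    have l4 : Tendsto (fun τ : ℝ => Real.exp (-(v + v ^ 2 / (2 * τ ^ 2)))) atTop
        (nhds (Real.exp (-v))) := by
      have h' := (l2.const_add v).neg
      have := (Real.continuous_exp.tendsto (-v)).comp (by simpa using h')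
      simpa [Function.comp_def] using this
    have := ((tendsto_const_nhds (x := v) (f := atTop)).mul l3).mul l4
    simpa using this


lemma comp_eq1 (B : ℕ) (hB : 1 ≤ B) (τ : ℝ) (hτ0 : 0 < τ) (v : ℝ) (hv : 0 ≤ v) :
    (Real.sqrt ((τ + v / τ) ^ 2) - τ) * ((τ + v / τ) ^ 2) ^ ((B : ℝ) / 2 - 1) *
        Real.exp (-(τ + v / τ) ^ 2 / 2) * (2 * (τ + v / τ) / τ)
      = 2 / τ ^ 2 * (v * (τ + v / τ) ^ (B - 1) * Real.exp (-(τ + v / τ) ^ 2 / 2)) := by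
  have hw : 0 < τ + v / τ := add_pos_of_pos_of_nonneg hτ0 (div_nonneg hv hτ0.le)
  have e2 : ((τ + v / τ) ^ 2 : ℝ) ^ ((B : ℝ) / 2 - 1) = (τ + v / τ) ^ ((B : ℝ) - 2) := by
    rw [← Real.rpow_natCast (τ + v / τ) 2, ← Real.rpow_mul hw.le]
    congr 1
    push_cast
    ring
  have e3 : (τ + v / τ) ^ ((B : ℝ) - 2) * (τ + v / τ) = (τ + v / τ) ^ (B - 1 : ℕ) := by
    rw [← Real.rpow_add_one hw.ne', ← Real.rpow_natCast (τ + v / τ) (B - 1),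
      Nat.cast_sub hB]
    congr 1
    push_cast
    ring
  rw [Real.sqrt_sq hw.le, e2, ← e3]
  field_simp
  ring

lemma comp_eq2 (B : ℕ) (τ : ℝ) (hτ0 : 0 < τ) (v : ℝ) :
    v * (τ + v / τ) ^ (B - 1) * Real.exp (-(τ + v / τ) ^ 2 / 2)
      = τ ^ (B - 1) * Real.exp (-τ ^ 2 / 2) *
          (v * (1 + v / τ ^ 2) ^ (B - 1) * Real.exp (-(v + v ^ 2 / (2 * τ ^ 2)))) := by
  have h1 : τ + v / τ = τ * (1 + v / τ ^ 2) := by field_simp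
  have h2 : -(τ + v / τ) ^ 2 / 2 = -τ ^ 2 / 2 + -(v + v ^ 2 / (2 * τ ^ 2)) := by
    field_simp; ring
  rw [h2, Real.exp_add, h1, mul_pow]
  ring
lemma subst_eq (B : ℕ) (hB : 1 ≤ B) (τ : ℝ) (hτ : 1 ≤ τ) :
    (∫ x in Ioi (τ ^ 2), (Real.sqrt x - τ) * x ^ ((B : ℝ) / 2 - 1) * Real.exp (-x / 2))
      = (2 / τ ^ 2 * (τ ^ (B - 1) * Real.exp (-τ ^ 2 / 2))) *
          ∫ v in Ioi (0:ℝ), v * (1 + v / τ ^ 2) ^ (B - 1) *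
            Real.exp (-(v + v ^ 2 / (2 * τ ^ 2))) := by
  have hτ0 : 0 < τ := lt_of_lt_of_le one_pos hτ
  have hBR : (1:ℝ) ≤ (B:ℝ) := by exact_mod_cast hB
  have hw : ∀ v : ℝ, 0 ≤ v → 0 < τ + v / τ :=
    fun v hv => add_pos_of_pos_of_nonneg hτ0 (div_nonneg hv hτ0.le)
  -- continuity of g on Ioi 0
  have gcont : ContinuousOn
      (fun x : ℝ => (Real.sqrt x - τ) * x ^ ((B : ℝ) / 2 - 1) * Real.exp (-x / 2)) (Ioi 0) := by
    have c1 : ContinuousOn (fun x : ℝ => x ^ ((B : ℝ) / 2 - 1)) (Ioi 0) := fun x hx =>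
      (Real.continuousAt_rpow_const x _ (Or.inl (ne_of_gt hx))).continuousWithinAt
    exact ((Real.continuous_sqrt.continuousOn.sub continuousOn_const).mul c1).mul
      (Real.continuous_exp.comp (continuous_id.neg.div_const 2)).continuousOn
  -- integrability of g on Ioi 0
  have gint : IntegrableOn
      (fun x : ℝ => (Real.sqrt x - τ) * x ^ ((B : ℝ) / 2 - 1) * Real.exp (-x / 2)) (Ioi 0) := by
    have hA := int_rpow_exp ((B : ℝ) / 2 - 1 / 2) (by linarith)
    have hC := int_rpow_exp ((B : ℝ) / 2 - 1) (by linarith)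
    refine IntegrableOn.congr_fun (hA.sub (hC.const_mul τ)) (fun x hx => ?_) measurableSet_Ioi
    have hx0 : (0:ℝ) < x := hx
    simp only [Pi.sub_apply]
    rw [Real.sqrt_eq_rpow, show (B : ℝ) / 2 - 1 / 2 = 1 / 2 + ((B : ℝ) / 2 - 1) by ring,
      Real.rpow_add hx0]
    ring
  have himage2 : ((fun v : ℝ => (τ + v / τ) ^ 2) '' Ici 0) ⊆ Ioi 0 := by
    rintro _ ⟨v, hv, rfl⟩
    exact pow_pos (hw v hv) 2
  have himage1 : ((fun v : ℝ => (τ + v / τ) ^ 2) '' Ioi 0) ⊆ Ioi 0 :=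
    (image_mono Ioi_subset_Ici_self).trans himage2
  have hfc : ContinuousOn (fun v : ℝ => (τ + v / τ) ^ 2) (Ici 0) :=
    ((continuous_const.add (continuous_id.div_const τ)).pow 2).continuousOn
  have hmaps : MapsTo (fun v : ℝ => (τ + v / τ) ^ 2) (Ici 0) (Ioi 0) :=
    fun v hv => himage2 (mem_image_of_mem _ hv)
  have key := integral_comp_mul_deriv_Ioi
    (f := fun v : ℝ => (τ + v / τ) ^ 2)
    (f' := fun v : ℝ => 2 * (τ + v / τ) / τ)
    (g := fun x : ℝ => (Real.sqrt x - τ) * x ^ ((B : ℝ) / 2 - 1) * Real.exp (-x / 2))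
    (a := 0)
    hfc
    (by
      apply (tendsto_pow_atTop two_ne_zero).comp
      exact tendsto_atTop_add_const_left atTop τ (tendsto_id.atTop_div_const hτ0))
    (by
      intro v hv
      have h1 : HasDerivAt (fun v : ℝ => τ + v / τ) (1 / τ) v :=
        ((hasDerivAt_id v).div_const τ).const_add τ
      have h2 := h1.pow 2
      have : ((2:ℕ):ℝ) * (τ + v / τ) ^ (2 - 1) * (1 / τ) = 2 * (τ + v / τ) / τ := by
        push_cast; ring
      rw [this] at h2
      exact h2.hasDerivWithinAt)
    (gcont.mono himage1)
    (gint.mono_set himage2)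
    (by
      -- integrability of the transformed integrand on Ici 0
      rw [integrableOn_Ici_iff_integrableOn_Ioi]
      set C : ℝ := 2 / τ ^ 2 * (τ ^ (B - 1) * Real.exp (-τ ^ 2 / 2)) with hC
      have hC0 : 0 ≤ C := by positivity
      apply Integrable.mono' (((bound_integrable B).const_mul C))
      · apply ContinuousOn.aestronglyMeasurable _ measurableSet_Ioi
        apply ContinuousOn.mul
        · exact gcont.comp (hfc.mono Ioi_subset_Ici_self)
            (fun v hv => himage1 (mem_image_of_mem _ hv))
        · exact ((continuous_const.mul (continuous_const.add
            (continuous_id.div_const τ))).div_const τ).continuousOn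
      · refine (ae_restrict_iff' measurableSet_Ioi).mpr (ae_of_all _ fun v hv => ?_)
        have hv0 : (0:ℝ) ≤ v := le_of_lt hv
        have := comp_eq1 B hB τ hτ0 v hv0
        rw [Function.comp_apply, Real.norm_eq_abs]
        calc |(Real.sqrt ((τ + v / τ) ^ 2) - τ) * ((τ + v / τ) ^ 2) ^ ((B : ℝ) / 2 - 1) *
              Real.exp (-(τ + v / τ) ^ 2 / 2) * (2 * (τ + v / τ) / τ)|
            = |2 / τ ^ 2 * (τ ^ (B - 1) * Real.exp (-τ ^ 2 / 2)) *
                (v * (1 + v / τ ^ 2) ^ (B - 1) * Real.exp (-(v + v ^ 2 / (2 * τ ^ 2))))| := by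
              rw [this, comp_eq2 B τ hτ0 v]; ring_nf
          _ ≤ C * (2 ^ B * ((1 + v ^ B) * Real.exp (-v))) := by
              rw [abs_mul]
              apply mul_le_mul _ (est B hB τ v hτ hv0) (abs_nonneg _) hC0
              rw [hC, abs_of_nonneg (by positivity)])
  have hf0 : ((τ + (0:ℝ) / τ) ^ 2) = τ ^ 2 := by norm_num
  beta_reduce at key
  rw [hf0] at key
  rw [← key]
  rw [← integral_const_mul]
  refine setIntegral_congr_fun measurableSet_Ioi (fun v hv => ?_)
  have hv0 : (0:ℝ) ≤ v := le_of_lt hv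
  rw [Function.comp_apply, comp_eq1 B hB τ hτ0 v hv0, comp_eq2 B τ hτ0 v]
  ring

/-- `∫_{τ²}^∞ (√x − τ) x^{B/2−1} e^{−x/2} dx ∼ 2 e^{−τ²/2} τ^{B−3}` as `τ → ∞`. -/
theorem stmt4 (B : ℕ) (hB : 1 ≤ B) :
    Tendsto
      (fun τ : ℝ =>
        Real.exp (τ ^ 2 / 2) * τ ^ ((3 : ℝ) - B) *
          ∫ x in Ioi (τ ^ 2),
            (Real.sqrt x - τ) * x ^ ((B : ℝ) / 2 - 1) * Real.exp (-x / 2))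
      atTop (nhds 2) := by
  have h2 : Tendsto (fun τ : ℝ => 2 *
      ∫ v in Ioi (0:ℝ), v * (1 + v / τ ^ 2) ^ (B - 1) * Real.exp (-(v + v ^ 2 / (2 * τ ^ 2))))
      atTop (nhds 2) := by
    have := (dct B hB).const_mul 2
    simpa using this
  refine Tendsto.congr' ?_ h2
  filter_upwards [eventually_ge_atTop (1:ℝ)] with τ hτ
  have hτ0 : 0 < τ := lt_of_lt_of_le one_pos hτ
  rw [subst_eq B hB τ hτ]
  set F : ℝ := ∫ v in Ioi (0:ℝ), v * (1 + v / τ ^ 2) ^ (B - 1) *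
    Real.exp (-(v + v ^ 2 / (2 * τ ^ 2))) with hF
  have e1 : (τ:ℝ) ^ (B - 1 : ℕ) = τ ^ ((B:ℝ) - 1) := by
    rw [← Real.rpow_natCast τ (B - 1), Nat.cast_sub hB, Nat.cast_one]
  have e2 : τ ^ ((3:ℝ) - B) * τ ^ ((B:ℝ) - 1) = τ ^ (2:ℝ) := by
    rw [← Real.rpow_add hτ0]
    norm_num
  have e3 : Real.exp (τ ^ 2 / 2) * Real.exp (-τ ^ 2 / 2) = 1 := by
    rw [← Real.exp_add, show τ ^ 2 / 2 + -τ ^ 2 / 2 = 0 by ring, Real.exp_zero]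
  have key : Real.exp (τ ^ 2 / 2) * τ ^ ((3:ℝ) - B) *
      (2 / τ ^ 2 * (τ ^ (B - 1 : ℕ) * Real.exp (-τ ^ 2 / 2))) = 2 := by
    rw [e1, show Real.exp (τ ^ 2 / 2) * τ ^ ((3:ℝ) - B) *
        (2 / τ ^ 2 * (τ ^ ((B:ℝ) - 1) * Real.exp (-τ ^ 2 / 2)))
      = (Real.exp (τ ^ 2 / 2) * Real.exp (-τ ^ 2 / 2)) *
        (τ ^ ((3:ℝ) - B) * τ ^ ((B:ℝ) - 1)) * (2 / τ ^ 2) by ring, e3, e2,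
      Real.rpow_two]
    field_simp
  calc 2 * F
      = (Real.exp (τ ^ 2 / 2) * τ ^ ((3:ℝ) - B) *
          (2 / τ ^ 2 * (τ ^ (B - 1 : ℕ) * Real.exp (-τ ^ 2 / 2)))) * F := by rw [key]
    _ = Real.exp (τ ^ 2 / 2) * τ ^ ((3:ℝ) - B) *
          (2 / τ ^ 2 * (τ ^ (B - 1 : ℕ) * Real.exp (-τ ^ 2 / 2)) * F) := by ring
end

section
/- Fix an integer B ≥ 1 and let f(x) = x^{B/2−1} e^{−x/2} / (2^{B/2} Γ(B/2)). For τ > 0 define D(τ) = [−(B + τ²) ∫_{τ²}^∞ (τ − √x) f(x) dx + τ ∫_{τ²}^∞ (√x − τ)² f(x) dx] / [Bτ − B ∫_{τ²}^∞ (τ − √x) f(x) dx]. Then D(τ) ∼ τ^{B−2} e^{−τ²/2} / (2^{B/2−1} B Γ(B/2)) as τ → ∞, i.e., lim_{τ→∞} D(τ) · 2^{B/2−1} B Γ(B/2) · e^{τ²/2} τ^{2−B} = 1. -/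
open MeasureTheory Real Set Filter

/-- The chi-square density with `B` degrees of freedom. -/
noncomputable def chiSqDensity (B : ℕ) (x : ℝ) : ℝ :=
  x ^ ((B : ℝ) / 2 - 1) * Real.exp (-x / 2) /
    ((2 : ℝ) ^ ((B : ℝ) / 2) * Real.Gamma ((B : ℝ) / 2))

/-- The undersampling ratio `δ` of the group LASSO phase transition, parametrized by
the optimal block soft threshold `τ`. -/
noncomputable def groupLassoDelta (B : ℕ) (τ : ℝ) : ℝ :=
  (-(B + τ ^ 2) * (∫ x in Ioi (τ ^ 2), (τ - Real.sqrt x) * chiSqDensity B x) +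
      τ * ∫ x in Ioi (τ ^ 2), (Real.sqrt x - τ) ^ 2 * chiSqDensity B x) /
    (B * τ - B * ∫ x in Ioi (τ ^ 2), (τ - Real.sqrt x) * chiSqDensity B x)

lemma l1 (n : ℕ) : IntegrableOn (fun u : ℝ => u ^ n * Real.exp (-u)) (Ioi 0) := by
  have h := Real.GammaIntegral_convergent (s := (n + 1 : ℝ)) (by positivity)
  apply h.congr_fun _ measurableSet_Ioi
  intro x hx
  show Real.exp (-x) * x ^ ((n:ℝ) + 1 - 1) = x ^ n * Real.exp (-x)
  rw [show (n:ℝ) + 1 - 1 = (n:ℝ) by ring, Real.rpow_natCast, mul_comm]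

lemma l2 (n : ℕ) : Tendsto (fun τ : ℝ => τ ^ n * Real.exp (-τ^2/2)) atTop (nhds 0) := by
  have h := tendsto_pow_mul_exp_neg_atTop_nhds_zero n
  refine squeeze_zero' ?_ ?_ h
  · filter_upwards [eventually_ge_atTop (0:ℝ)] with τ hτ
    positivity
  · filter_upwards [eventually_ge_atTop (2:ℝ)] with τ hτ
    have : -τ^2/2 ≤ -τ := by nlinarith
    have := Real.exp_le_exp.2 this
    nlinarith [pow_nonneg (by linarith : (0:ℝ) ≤ τ) n, Real.exp_pos (-τ^2/2)]

lemma l3 (k m : ℕ) : IntegrableOn (fun u : ℝ => u ^ k * (1+u)^m * Real.exp (-u)) (Ioi 0) := by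
  have heq : (fun u : ℝ => u ^ k * (1+u)^m * Real.exp (-u))
      = fun u : ℝ => ∑ j ∈ Finset.range (m+1), (m.choose j : ℝ) * (u ^ (k + j) * Real.exp (-u)) := by
    funext u
    rw [add_comm (1:ℝ) u, add_pow]
    rw [Finset.mul_sum, Finset.sum_mul]
    refine Finset.sum_congr rfl fun j hj => ?_
    rw [pow_add]
    ring
  rw [heq]
  exact integrable_finset_sum _ fun j _ => ((l1 (k + j)).const_mul _)



lemma l4 (k m : ℕ) :
    Tendsto (fun τ : ℝ => ∫ u in Ioi 0, u^k * (1+u/τ^2)^m * Real.exp (-u - u^2/(2*τ^2)))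
      atTop (nhds (∫ u in Ioi 0, u^k * Real.exp (-u))) := by
  apply tendsto_integral_filter_of_dominated_convergence
    (bound := fun u : ℝ => u ^ k * (1+u)^m * Real.exp (-u))
  · filter_upwards with τ
    apply Continuous.aestronglyMeasurable
    fun_prop
  · filter_upwards [eventually_ge_atTop (1:ℝ)] with τ hτ
    rw [ae_restrict_iff' measurableSet_Ioi]
    filter_upwards with u hu
    have hu0 : (0:ℝ) < u := hu
    have hτ0 : (0:ℝ) < τ := by linarith
    have h1 : (0:ℝ) ≤ 1 + u/τ^2 := by positivity
    rw [Real.norm_eq_abs, abs_of_nonneg (by positivity)]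
    have hb : (1 + u/τ^2)^m ≤ (1+u)^m := by
      apply pow_le_pow_left₀ h1
      have : u / τ^2 ≤ u := by
        apply div_le_self hu0.le
        nlinarith
      linarith
    have he : Real.exp (-u - u^2/(2*τ^2)) ≤ Real.exp (-u) := by
      apply Real.exp_le_exp.2
      have : (0:ℝ) ≤ u^2/(2*τ^2) := by positivity
      linarith
    have h2 : (0:ℝ) ≤ u^k := by positivity
    calc u^k * (1+u/τ^2)^m * Real.exp (-u - u^2/(2*τ^2))
        ≤ u^k * (1+u)^m * Real.exp (-u - u^2/(2*τ^2)) := by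
          apply mul_le_mul_of_nonneg_right (mul_le_mul_of_nonneg_left hb h2) (Real.exp_pos _).le
      _ ≤ u^k * (1+u)^m * Real.exp (-u) := by
          apply mul_le_mul_of_nonneg_left he (by positivity)
  · exact l3 k m
  · rw [ae_restrict_iff' measurableSet_Ioi]
    filter_upwards with u hu
    have hpow : Tendsto (fun τ : ℝ => τ^2) atTop atTop :=
      tendsto_pow_atTop (by norm_num)
    have h1 : Tendsto (fun τ : ℝ => u/τ^2) atTop (nhds 0) :=
      Tendsto.div_atTop tendsto_const_nhds hpow
    have h2 : Tendsto (fun τ : ℝ => u^2/(2*τ^2)) atTop (nhds 0) :=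
      Tendsto.div_atTop tendsto_const_nhds (hpow.const_mul_atTop (by norm_num))
    have h3 : Tendsto (fun τ : ℝ => (1+u/τ^2)^m) atTop (nhds 1) := by
      have := ((tendsto_const_nhds (x := (1:ℝ))).add h1).pow m
      simpa using this
    have h4 : Tendsto (fun τ : ℝ => Real.exp (-u - u^2/(2*τ^2))) atTop (nhds (Real.exp (-u))) := by
      have := (Real.continuous_exp.tendsto (-u - 0)).comp
        ((tendsto_const_nhds (x := -u)).sub h2)
      simpa [Function.comp_def] using this
    have := ((tendsto_const_nhds (x := u^k)).mul h3).mul h4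
    simpa using this

lemma l5 : ∫ u in Ioi 0, u * Real.exp (-u) = 1 := by
  have h := Real.Gamma_eq_integral (s := 2) (by norm_num)
  rw [Real.Gamma_two] at h
  rw [h]
  apply setIntegral_congr_fun measurableSet_Ioi
  intro x hx
  norm_num [mul_comm]




lemma l6 (m k : ℕ) (τ : ℝ) (hτ : 0 < τ) :
    ∫ x in Ioi (τ^2), (Real.sqrt x - τ)^k * chiSqDensity (m+1) x
      = 2 * τ^m * Real.exp (-τ^2/2) /
          (((2:ℝ) ^ (((m+1:ℕ):ℝ)/2) * Real.Gamma (((m+1:ℕ):ℝ)/2)) * τ^(k+1)) *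
        ∫ u in Ioi 0, u^k * (1+u/τ^2)^m * Real.exp (-u - u^2/(2*τ^2)) := by
  set C := (2:ℝ) ^ (((m+1:ℕ):ℝ)/2) * Real.Gamma (((m+1:ℕ):ℝ)/2) with hCdef
  have hC : 0 < C := by
    apply mul_pos (Real.rpow_pos_of_pos (by norm_num) _)
    exact Real.Gamma_pos_of_pos (by positivity)
  set φ : ℝ → ℝ := fun u => (τ + u/τ)^2 with hφ
  have hderiv : ∀ u ∈ Ioi (0:ℝ), HasDerivWithinAt φ (2*(τ+u/τ)/τ) (Ioi 0) u := by
    intro u hu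
    have h : HasDerivAt φ (2*(τ+u/τ)/τ) u := by
      have h := (((hasDerivAt_id u).div_const τ).const_add τ).fun_pow 2
      refine h.congr_deriv ?_
      show ((2:ℕ):ℝ) * (τ + u / τ) ^ (2 - 1) * (1 / τ) = 2 * (τ + u / τ) / τ
      push_cast
      ring
    exact h.hasDerivWithinAt
  have hinj : InjOn φ (Ioi 0) := by
    have hmono : StrictMonoOn φ (Ioi 0) := by
      intro a ha b hb hab
      have ha' : (0:ℝ) < a := ha
      have h1 : τ + a/τ < τ + b/τ := by gcongr
      have h2 : 0 < τ + a/τ := by positivity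
      simp only [hφ]
      nlinarith
    exact hmono.injOn
  have himg : φ '' Ioi 0 = Ioi (τ^2) := by
    ext y
    simp only [mem_image, mem_Ioi]
    constructor
    · rintro ⟨u, hu, rfl⟩
      have h0 : 0 < u/τ := div_pos hu hτ
      simp only [hφ]
      nlinarith
    · intro hy
      have hy0 : (0:ℝ) ≤ y := by nlinarith
      have hsy : τ < Real.sqrt y := by
        rw [show τ = Real.sqrt (τ^2) by rw [Real.sqrt_sq hτ.le]]
        exact Real.sqrt_lt_sqrt (by positivity) hy
      refine ⟨τ*(Real.sqrt y - τ), mul_pos hτ (by linarith), ?_⟩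
      have h1 : τ + τ*(Real.sqrt y - τ)/τ = Real.sqrt y := by field_simp; ring
      simp only [hφ, h1]
      exact Real.sq_sqrt hy0
  have key := integral_image_eq_integral_abs_deriv_smul measurableSet_Ioi hderiv hinj
    (fun x => (Real.sqrt x - τ)^k * chiSqDensity (m+1) x)
  rw [himg] at key
  rw [key, ← integral_const_mul]
  apply setIntegral_congr_fun measurableSet_Ioi
  intro u hu
  have hu0 : (0:ℝ) < u := hu
  have ht : (0:ℝ) < τ + u/τ := by positivity
  show |2*(τ+u/τ)/τ| • ((Real.sqrt ((τ+u/τ)^2) - τ)^k * chiSqDensity (m+1) ((τ+u/τ)^2)) = _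
  rw [smul_eq_mul, abs_of_pos (by positivity), Real.sqrt_sq ht.le]
  simp only [chiSqDensity, ← hCdef]
  have hpow : (((τ+u/τ)^2:ℝ)) ^ (((m+1:ℕ):ℝ)/2 - 1) = (τ+u/τ)^m / (τ+u/τ) := by
    rw [← Real.rpow_natCast (τ+u/τ) 2, ← Real.rpow_mul ht.le,
      show ((2:ℕ):ℝ) * (((m+1:ℕ):ℝ)/2 - 1) = (m:ℝ) - 1 by push_cast; ring,
      Real.rpow_sub ht, Real.rpow_natCast, Real.rpow_one]
  have hexp : Real.exp (-((τ+u/τ)^2)/2) = Real.exp (-τ^2/2) * Real.exp (-u - u^2/(2*τ^2)) := by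
    rw [← Real.exp_add]
    congr 1
    field_simp
    ring
  have hsplit : (τ+u/τ)^m = τ^m * (1+u/τ^2)^m := by
    rw [← mul_pow]
    congr 1
    field_simp
  rw [hpow, hexp, hsplit]
  have hne : τ + u/τ ≠ 0 := ht.ne'
  field_simp
  rw [show τ^2+u-τ^2 = u by ring, div_pow, pow_succ]
  field_simp


/-- `D(τ) ∼ τ^{B−2} e^{−τ²/2} / (2^{B/2−1} B Γ(B/2))` as `τ → ∞`. -/
theorem stmt8 (B : ℕ) (hB : 1 ≤ B) :
    Tendsto
      (fun τ : ℝ =>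
        groupLassoDelta B τ * ((2 : ℝ) ^ ((B : ℝ) / 2 - 1) * B * Real.Gamma ((B : ℝ) / 2)) *
          Real.exp (τ ^ 2 / 2) * τ ^ ((2 : ℝ) - B))
      atTop (nhds 1) := by
  obtain ⟨m, rfl⟩ : ∃ m, B = m + 1 := ⟨B - 1, (Nat.succ_pred_eq_of_pos hB).symm⟩
  have hb0 : (0:ℝ) < ((m+1:ℕ):ℝ) := by positivity
  have hC : (0:ℝ) < (2:ℝ) ^ (((m+1:ℕ):ℝ)/2) * Real.Gamma (((m+1:ℕ):ℝ)/2) := by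
    apply mul_pos (Real.rpow_pos_of_pos (by norm_num) _)
    exact Real.Gamma_pos_of_pos (by positivity)
  have hpow2 : Tendsto (fun τ:ℝ => τ^2) atTop atTop := tendsto_pow_atTop (by norm_num)
  have hpow3 : Tendsto (fun τ:ℝ => τ^3) atTop atTop := tendsto_pow_atTop (by norm_num)
  have hJ1 : Tendsto (fun τ : ℝ =>
      ∫ u in Ioi 0, u^1*(1+u/τ^2)^m*Real.exp (-u-u^2/(2*τ^2))) atTop (nhds 1) := by
    have h := l4 1 m
    rw [show (∫ u in Ioi (0:ℝ), u^1*Real.exp (-u)) = 1 from by simpa using l5] at h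
    exact h
  have hJ2 := l4 2 m
  have hε : Tendsto (fun τ:ℝ => 2*τ^m*Real.exp (-τ^2/2)/
      (((2:ℝ)^(((m+1:ℕ):ℝ)/2)*Real.Gamma (((m+1:ℕ):ℝ)/2))*τ^3)) atTop (nhds 0) := by
    have h1 : Tendsto (fun τ:ℝ => 2*τ^m*Real.exp (-τ^2/2)) atTop (nhds 0) := by
      have := (l2 m).const_mul (2:ℝ)
      simpa [mul_assoc] using this
    exact Tendsto.div_atTop h1 (hpow3.const_mul_atTop hC)
  have hden : Tendsto (fun τ:ℝ => ((m+1:ℕ):ℝ) + ((m+1:ℕ):ℝ) *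
      (2*τ^m*Real.exp (-τ^2/2)/(((2:ℝ)^(((m+1:ℕ):ℝ)/2)*Real.Gamma (((m+1:ℕ):ℝ)/2))*τ^3)) *
      (∫ u in Ioi 0, u^1*(1+u/τ^2)^m*Real.exp (-u-u^2/(2*τ^2)))) atTop
      (nhds (((m+1:ℕ):ℝ) + ((m+1:ℕ):ℝ) * 0 * 1)) :=
    tendsto_const_nhds.add ((tendsto_const_nhds.mul hε).mul hJ1)
  have hnum : Tendsto (fun τ:ℝ =>
      ((∫ u in Ioi 0, u^1*(1+u/τ^2)^m*Real.exp (-u-u^2/(2*τ^2))) * (1 + ((m+1:ℕ):ℝ)/τ^2)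
        + (∫ u in Ioi 0, u^2*(1+u/τ^2)^m*Real.exp (-u-u^2/(2*τ^2))) / τ^2) * ((m+1:ℕ):ℝ))
      atTop (nhds ((1 * (1+0) + 0) * ((m+1:ℕ):ℝ))) :=
    ((hJ1.mul (tendsto_const_nhds.add (Tendsto.div_atTop tendsto_const_nhds hpow2))).add
      (Tendsto.div_atTop hJ2 hpow2)).mul tendsto_const_nhds
  have hG := hnum.div hden (by simpa using hb0.ne')
  rw [show ((1:ℝ) * (1+0) + 0) * ((m+1:ℕ):ℝ) / (((m+1:ℕ):ℝ) + ((m+1:ℕ):ℝ) * 0 * 1) = 1 from by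
    field_simp; norm_num] at hG
  apply hG.congr'
  filter_upwards [eventually_ge_atTop (1:ℝ)] with τ hτ1
  have hτ0 : (0:ℝ) < τ := lt_of_lt_of_le one_pos hτ1
  have hswap : ∫ x in Ioi (τ^2), (τ - Real.sqrt x) * chiSqDensity (m+1) x
      = - ∫ x in Ioi (τ^2), (Real.sqrt x - τ)^1 * chiSqDensity (m+1) x := by
    rw [← integral_neg]
    apply setIntegral_congr_fun measurableSet_Ioi
    intro x hx
    ring
  have hI1 := l6 m 1 τ hτ0
  have hI2 := l6 m 2 τ hτ0
  have hrpow : τ ^ ((2:ℝ) - ((m+1:ℕ):ℝ)) = τ^2/τ^(m+1) := by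
    rw [Real.rpow_sub hτ0, show ((2:ℝ)) = ((2:ℕ):ℝ) by norm_num, Real.rpow_natCast,
      Real.rpow_natCast]
  have hexpm : Real.exp (-τ^2/2) = (Real.exp (τ^2/2))⁻¹ := by
    rw [← Real.exp_neg]
    congr 1
    ring
  have hj1nn : 0 ≤ ∫ u in Ioi (0:ℝ), u^1*(1+u/τ^2)^m*Real.exp (-u-u^2/(2*τ^2)) := by
    apply setIntegral_nonneg measurableSet_Ioi
    intro u hu
    have hu0 : (0:ℝ) < u := hu
    positivity
  have hg1 : ((2:ℝ)^(((m+1:ℕ):ℝ)/2)) ≠ 0 := by positivity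
  have hg2 : Real.Gamma (((m+1:ℕ):ℝ)/2) ≠ 0 := (Real.Gamma_pos_of_pos (by positivity)).ne'
  have hE : Real.exp (τ^2/2) ≠ 0 := (Real.exp_pos _).ne'
  have hK : (2:ℝ)^(((m+1:ℕ):ℝ)/2 - 1) = (2:ℝ)^(((m+1:ℕ):ℝ)/2)/2 := by
    rw [Real.rpow_sub (by norm_num), Real.rpow_one]
  simp only [groupLassoDelta, Pi.div_apply]
  rw [hswap, hI1, hI2, hrpow, hexpm, hK]
  set j1 := ∫ u in Ioi (0:ℝ), u^1*(1+u/τ^2)^m*Real.exp (-u-u^2/(2*τ^2)) with hj1def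
  set j2 := ∫ u in Ioi (0:ℝ), u^2*(1+u/τ^2)^m*Real.exp (-u-u^2/(2*τ^2)) with hj2def
  have hc1 : 0 ≤ 2*τ^m*(Real.exp (τ^2/2))⁻¹/
      ((2:ℝ)^(((m+1:ℕ):ℝ)/2)*Real.Gamma (((m+1:ℕ):ℝ)/2)*τ^(1+1)) := by positivity
  have hc3 : 0 ≤ 2*τ^m*(Real.exp (τ^2/2))⁻¹/
      ((2:ℝ)^(((m+1:ℕ):ℝ)/2)*Real.Gamma (((m+1:ℕ):ℝ)/2)*τ^3) := by positivity
  have hD : (0:ℝ) < ((m+1:ℕ):ℝ) * τ - ((m+1:ℕ):ℝ) *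
      -(2*τ^m*(Real.exp (τ^2/2))⁻¹/
        ((2:ℝ)^(((m+1:ℕ):ℝ)/2)*Real.Gamma (((m+1:ℕ):ℝ)/2)*τ^(1+1)) * j1) := by
    have h1 : 0 ≤ ((m+1:ℕ):ℝ) * (2*τ^m*(Real.exp (τ^2/2))⁻¹/
        ((2:ℝ)^(((m+1:ℕ):ℝ)/2)*Real.Gamma (((m+1:ℕ):ℝ)/2)*τ^(1+1)) * j1) :=
      mul_nonneg hb0.le (mul_nonneg hc1 hj1nn)
    nlinarith [mul_pos hb0 hτ0]
  have hDR : (0:ℝ) < ((m+1:ℕ):ℝ) + ((m+1:ℕ):ℝ) *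
      (2*τ^m*(Real.exp (τ^2/2))⁻¹/
        ((2:ℝ)^(((m+1:ℕ):ℝ)/2)*Real.Gamma (((m+1:ℕ):ℝ)/2)*τ^3)) * j1 := by
    have h1 : 0 ≤ ((m+1:ℕ):ℝ) * (2*τ^m*(Real.exp (τ^2/2))⁻¹/
        ((2:ℝ)^(((m+1:ℕ):ℝ)/2)*Real.Gamma (((m+1:ℕ):ℝ)/2)*τ^3)) * j1 :=
      mul_nonneg (mul_nonneg hb0.le hc3) hj1nn
    linarith
  field_simp [hD.ne', hDR.ne', hτ0.ne']
  have hZ : 0 < τ * rexp (τ ^ 2 / 2) * 2 ^ (((m+1:ℕ):ℝ) / 2) * Gamma (((m+1:ℕ):ℝ) / 2) * τ ^ (1 + 1) := by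
    have := Real.Gamma_pos_of_pos (show (0:ℝ) < ((m+1:ℕ):ℝ)/2 by positivity)
    positivity
  have hZ' : 0 ≤ j1 * 2 * τ ^ m := by positivity
  rw [eq_div_iff (ne_of_gt (by linarith))]
  ring
end

section
/- Fix an integer B ≥ 1. Let θ ∈ ℝ^B be a fixed unit vector (‖θ‖₂ = 1), let μ ≥ 0 and a > 0 with a² > B, let z be a standard Gaussian random vector in ℝ^B (coordinates i.i.d. N(0,1)), and set y = μθ + z. Then P(‖y‖₂ > μ + a) ≤ 2 e^{−a²/2} + e^{−(1/2 − B/(2a²)) a²} (B/a²)^{−B/2}. -/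
open MeasureTheory ProbabilityTheory Real Set

lemma lintegral_pi_prod_apply {n : ℕ} (μ : Measure ℝ) [SigmaFinite μ]
    (f : ℝ → ENNReal) (hf : Measurable f) :
    ∫⁻ x : Fin n → ℝ, ∏ i, f (x i) ∂(Measure.pi fun _ => μ)
      = (∫⁻ x, f x ∂μ) ^ n := by
  induction n with
  | zero => simp [Measure.pi_of_empty]
  | succ n ih =>
    rw [← ((measurePreserving_piFinSuccAbove (fun _ : Fin (n + 1) => μ) 0).symm).lintegral_comp_emb
      (MeasurableEquiv.measurableEmbedding _)]
    simp_rw [MeasurableEquiv.piFinSuccAbove_symm_apply, Fin.insertNthEquiv,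
      Fin.prod_univ_succ, Fin.insertNth_zero, Equiv.coe_fn_mk]
    simp only [Fin.cons_zero, Fin.cons_succ, cast_eq]
    have hmeas : Measurable fun y : Fin n → ℝ => ∏ i, f (y i) :=
      Finset.measurable_prod _ fun i _ => hf.comp (measurable_pi_apply i)
    rw [lintegral_prod_mul hf.aemeasurable hmeas.aemeasurable, ih, pow_succ, mul_comm]

lemma single_lintegral (l : ℝ) (hl : 0 < l) (hl2 : l < 1 / 2) :
    ∫⁻ x, ENNReal.ofReal (Real.exp (l * x ^ 2)) ∂(gaussianReal 0 1)
      = ENNReal.ofReal ((1 - 2 * l) ^ (-(1 : ℝ) / 2)) := by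
  have hb : (0 : ℝ) < 1 / 2 - l := by linarith
  rw [gaussianReal_of_var_ne_zero 0 one_ne_zero,
    lintegral_withDensity_eq_lintegral_mul _ (measurable_gaussianPDF 0 1)
      (by measurability)]
  have heq : ∀ x : ℝ, (gaussianPDF 0 1 * fun x => ENNReal.ofReal (Real.exp (l * x ^ 2))) x
      = ENNReal.ofReal ((√(2 * π))⁻¹ * Real.exp (-(1 / 2 - l) * x ^ 2)) := by
    intro x
    simp only [Pi.mul_apply, gaussianPDF, gaussianPDFReal, NNReal.coe_one, mul_one, sub_zero]
    rw [← ENNReal.ofReal_mul (by positivity)]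
    congr 1
    rw [mul_assoc, ← Real.exp_add]
    ring_nf
  simp_rw [heq]
  rw [← ofReal_integral_eq_lintegral_ofReal
      (((integrable_exp_neg_mul_sq hb).const_mul _))
      (Filter.Eventually.of_forall fun x => by positivity)]
  congr 1
  rw [integral_const_mul, integral_gaussian]
  have h1 : (1 : ℝ) - 2 * l = 2 * (1 / 2 - l) := by ring
  rw [h1, show (-1 : ℝ) / 2 = -(1 / 2) by norm_num,
    Real.rpow_neg (by positivity), ← Real.sqrt_eq_rpow, ← Real.sqrt_inv, ← Real.sqrt_inv,
    ← Real.sqrt_mul (by positivity)]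
  congr 1
  have hpi : (π : ℝ) ≠ 0 := Real.pi_ne_zero
  have h2 : (1 : ℝ) / 2 - l ≠ 0 := ne_of_gt hb
  have hpos := Real.pi_pos
  have h3 : (1 : ℝ) - l * 2 ≠ 0 := by nlinarith
  have h4 : π * 2 - π * l * 4 ≠ 0 := by nlinarith
  field_simp

/-- Lemma 4.3 of the paper: for a fixed unit vector `θ ∈ ℝ^B`, `μ ≥ 0`, `a² > B`, and
`y = μθ + z` with `z` standard Gaussian in `ℝ^B`,
`P(‖y‖₂ > μ + a) ≤ 2 e^{−a²/2} + e^{−(1/2 − B/(2a²)) a²} (B/a²)^{−B/2}`. -/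
theorem stmt13 (B : ℕ) (hB : 1 ≤ B) (θ : Fin B → ℝ) (hθ : Real.sqrt (∑ i, θ i ^ 2) = 1)
    (μ : ℝ) (hμ : 0 ≤ μ) (a : ℝ) (ha : 0 < a) (ha2 : (B : ℝ) < a ^ 2) :
    (Measure.pi fun _ : Fin B => gaussianReal 0 1)
        {z : Fin B → ℝ | μ + a < Real.sqrt (∑ i, (μ * θ i + z i) ^ 2)}
      ≤ ENNReal.ofReal
          (2 * Real.exp (-a ^ 2 / 2) +
            Real.exp (-(1 / 2 - (B : ℝ) / (2 * a ^ 2)) * a ^ 2) *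
              ((B : ℝ) / a ^ 2) ^ (-(B : ℝ) / 2)) := by
  have ha2' : (0 : ℝ) < a ^ 2 := by positivity
  have hBpos : (0 : ℝ) < (B : ℝ) := by exact_mod_cast hB
  set l : ℝ := 1 / 2 - (B : ℝ) / (2 * a ^ 2) with hl_def
  have hl0 : 0 < l := by
    rw [hl_def, sub_pos, div_lt_iff₀ (by positivity)]
    nlinarith
  have hl2 : l < 1 / 2 := by
    rw [hl_def]
    have : (0 : ℝ) < (B : ℝ) / (2 * a ^ 2) := by positivity
    linarith
  have h12 : 1 - 2 * l = (B : ℝ) / a ^ 2 := by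
    rw [hl_def]
    field_simp
    ring
  set P := (Measure.pi fun _ : Fin B => gaussianReal 0 1) with hP
  set ε : ENNReal := ENNReal.ofReal (Real.exp (l * a ^ 2)) with hε_def
  set g : (Fin B → ℝ) → ENNReal := fun z => ENNReal.ofReal (Real.exp (l * ∑ i, z i ^ 2))
    with hg_def
  have hθ2 : ∑ i, θ i ^ 2 = 1 := by
    rwa [show (1 : ℝ) = Real.sqrt 1 by simp, Real.sqrt_inj
      (Finset.sum_nonneg fun i _ => sq_nonneg _) zero_le_one] at hθ
  -- inclusion of events
  have hsub : {z : Fin B → ℝ | μ + a < Real.sqrt (∑ i, (μ * θ i + z i) ^ 2)}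
      ⊆ {z : Fin B → ℝ | ε ≤ g z} := by
    intro z hz
    simp only [mem_setOf_eq] at hz ⊢
    have hzsum : (0 : ℝ) ≤ ∑ i, z i ^ 2 := Finset.sum_nonneg fun i _ => sq_nonneg _
    set s : ℝ := Real.sqrt (∑ i, z i ^ 2) with hs_def
    have hs0 : 0 ≤ s := Real.sqrt_nonneg _
    have hs2 : s ^ 2 = ∑ i, z i ^ 2 := Real.sq_sqrt hzsum
    have hcs : ∑ i, θ i * z i ≤ s := by
      have := Real.sum_mul_le_sqrt_mul_sqrt Finset.univ θ z
      rwa [hθ, one_mul] at this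
    have hexp : ∑ i, (μ * θ i + z i) ^ 2
        = μ ^ 2 * (∑ i, θ i ^ 2) + 2 * μ * (∑ i, θ i * z i) + ∑ i, z i ^ 2 := by
      rw [Finset.mul_sum, Finset.mul_sum, ← Finset.sum_add_distrib, ← Finset.sum_add_distrib]
      exact Finset.sum_congr rfl fun i _ => by ring
    have hle : Real.sqrt (∑ i, (μ * θ i + z i) ^ 2) ≤ μ + s := by
      rw [show μ + s = Real.sqrt ((μ + s) ^ 2) from (Real.sqrt_sq (by positivity)).symm]
      apply Real.sqrt_le_sqrt
      rw [hexp, hθ2]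
      nlinarith
    have has : a < s := by linarith [lt_of_lt_of_le hz hle]
    have ha2s : a ^ 2 < ∑ i, z i ^ 2 := by
      rw [← hs2]; nlinarith
    exact ENNReal.ofReal_le_ofReal (Real.exp_le_exp.mpr (by nlinarith))
  -- measurability
  have hf1 : Measurable fun x : ℝ => ENNReal.ofReal (Real.exp (l * x ^ 2)) :=
    (Real.measurable_exp.comp ((measurable_id.pow_const 2).const_mul l)).ennreal_ofReal
  have hg_meas : Measurable g := by
    apply Measurable.ennreal_ofReal
    exact Real.measurable_exp.comp
      ((Finset.measurable_sum _ fun i _ => (measurable_pi_apply i).pow_const 2).const_mul l)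
  -- compute the lintegral of g
  have hint : ∫⁻ z, g z ∂P = ENNReal.ofReal ((((B : ℝ) / a ^ 2) ^ (-(1 : ℝ) / 2)) ^ B) := by
    have hgz : ∀ z : Fin B → ℝ, g z = ∏ i, ENNReal.ofReal (Real.exp (l * z i ^ 2)) := by
      intro z
      rw [hg_def]
      simp only
      rw [Finset.mul_sum, Real.exp_sum, ENNReal.ofReal_prod_of_nonneg
        (fun i _ => (Real.exp_pos _).le)]
    simp_rw [hgz]
    rw [hP, lintegral_pi_prod_apply _ _ hf1, single_lintegral l hl0 hl2, h12,
      ← ENNReal.ofReal_pow (by positivity)]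
  have hc : (((B : ℝ) / a ^ 2) ^ (-(1 : ℝ) / 2)) ^ B = ((B : ℝ) / a ^ 2) ^ (-(B : ℝ) / 2) := by
    rw [← Real.rpow_natCast (((B : ℝ) / a ^ 2) ^ (-(1 : ℝ) / 2)) B,
      ← Real.rpow_mul (by positivity)]
    congr 1
    push_cast
    ring
  -- Markov inequality
  have hmark := mul_meas_ge_le_lintegral₀ (μ := P) hg_meas.aemeasurable ε
  have hε0 : ε ≠ 0 := (ENNReal.ofReal_pos.mpr (Real.exp_pos _)).ne'
  have hεtop : ε ≠ ⊤ := ENNReal.ofReal_ne_top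
  calc P {z : Fin B → ℝ | μ + a < Real.sqrt (∑ i, (μ * θ i + z i) ^ 2)}
      ≤ P {z : Fin B → ℝ | ε ≤ g z} := measure_mono hsub
    _ = ε⁻¹ * (ε * P {z : Fin B → ℝ | ε ≤ g z}) := by
        rw [← mul_assoc, ENNReal.inv_mul_cancel hε0 hεtop, one_mul]
    _ ≤ ε⁻¹ * ∫⁻ z, g z ∂P := mul_le_mul_right hmark _
    _ = ENNReal.ofReal (Real.exp (-(1 / 2 - (B : ℝ) / (2 * a ^ 2)) * a ^ 2) *
          ((B : ℝ) / a ^ 2) ^ (-(B : ℝ) / 2)) := by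
        rw [hint, hc, hε_def, ← ENNReal.ofReal_inv_of_pos (Real.exp_pos _), ← Real.exp_neg,
          ← ENNReal.ofReal_mul (Real.exp_pos _).le]
        congr 2
        rw [hl_def]
        ring
    _ ≤ ENNReal.ofReal (2 * Real.exp (-a ^ 2 / 2) +
          Real.exp (-(1 / 2 - (B : ℝ) / (2 * a ^ 2)) * a ^ 2) *
            ((B : ℝ) / a ^ 2) ^ (-(B : ℝ) / 2)) := by
        apply ENNReal.ofReal_le_ofReal
        have : (0 : ℝ) ≤ 2 * Real.exp (-a ^ 2 / 2) := by positivity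
        linarith
end
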